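/- Let n nodes have features h_i ∈ ℝ^d and coordinates Z_i ∈ ℝ^{3×m}, and suppose messages m_{ij} = φ_m(h_i, h_j, f'(Z_{ij}), e_{ij}) are computed from pairwise E(3)-invariant quantities. Then the coordinate update Z_i' = Z_i + (1/|N(i)|) Σ_{j∈N(i)} Z_{ij} φ_Z(m_{ij}) is E(3)-equivariant: replacing each Z_k by OZ_k + t𝟙ᵀ (O ∈ O(3), t ∈ ℝ³) yields updated coordinates OZ_i' + t𝟙ᵀ. -/

import Mathlib

open Matrix BigOperators Finset

noncomputable def frob {m : ℕ} (A : Matrix (Fin m) (Fin m) ℝ) : ℝ :=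
  Real.sqrt (∑ i, ∑ j, (A i j) ^ 2)

noncomputable def gram {m : ℕ} (Z : Matrix (Fin 3) (Fin m) ℝ) :
    Matrix (Fin m) (Fin m) ℝ :=
  (frob (Zᵀ * Z))⁻¹ • (Zᵀ * Z)

def act {m : ℕ} (O : Matrix (Fin 3) (Fin 3) ℝ) (t : Fin 3 → ℝ)
    (Z : Matrix (Fin 3) (Fin m) ℝ) : Matrix (Fin 3) (Fin m) ℝ :=
  O * Z + Matrix.of (fun i _ => t i)

lemma gram_rot {m : ℕ} (O : Matrix (Fin 3) (Fin 3) ℝ) (hO : Oᵀ * O = 1)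
    (Z : Matrix (Fin 3) (Fin m) ℝ) : gram (O * Z) = gram Z := by
  have : (O * Z)ᵀ * (O * Z) = Zᵀ * Z := by
    rw [Matrix.transpose_mul, Matrix.mul_assoc, ← Matrix.mul_assoc Oᵀ, hO, Matrix.one_mul]
  simp only [_root_.gram, this]

theorem coord_update_equivariant {n m d p : ℕ}
    (h : Fin n → (Fin d → ℝ)) (Z : Fin n → Matrix (Fin 3) (Fin m) ℝ)
    (φm : (Fin d → ℝ) → (Fin d → ℝ) → Matrix (Fin m) (Fin m) ℝ → ℝ → (Fin p → ℝ))
    (φZ : (Fin p → ℝ) → Matrix (Fin m) (Fin m) ℝ)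
    (e : Fin n → Fin n → ℝ) (N : Fin n → Finset (Fin n))
    (hN : ∀ i, (N i).Nonempty)
    (O : Matrix (Fin 3) (Fin 3) ℝ) (hO : Oᵀ * O = 1) (t : Fin 3 → ℝ)
    (update : (Fin n → Matrix (Fin 3) (Fin m) ℝ) → Fin n → Matrix (Fin 3) (Fin m) ℝ)
    (hupdate : ∀ W i, update W i = W i + ((N i).card : ℝ)⁻¹ •
      ∑ j ∈ N i, (W i - W j) * φZ (φm (h i) (h j) (gram (W i - W j)) (e i j)))
    (i : Fin n) :
    update (fun k => act O t (Z k)) i = act O t (update Z i) := by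
  have hdiff : ∀ j : Fin n, act O t (Z i) - act O t (Z j) = O * (Z i - Z j) := by
    intro j
    simp [act, Matrix.mul_sub]
  rw [hupdate, hupdate]
  simp only [hdiff]
  have hsum : ∑ j ∈ N i, (O * (Z i - Z j)) *
      φZ (φm (h i) (h j) (gram (O * (Z i - Z j))) (e i j)) =
      O * ∑ j ∈ N i, (Z i - Z j) * φZ (φm (h i) (h j) (gram (Z i - Z j)) (e i j)) := by
    rw [Matrix.mul_sum]
    refine Finset.sum_congr rfl fun j _ => ?_
    rw [gram_rot O hO, Matrix.mul_assoc]
  rw [hsum]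
  simp [act, Matrix.mul_add, Matrix.mul_smul]
  abel
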